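/- Let 𝒯 = (T, λ) be a temporal oriented tree, let G be its connectivity graph, and let u_1, u_2, …, u_k (indices taken modulo k) be the cyclically ordered vertices of an induced cycle of G of even length k ≥ 6. Then for every index i, every temporal path of 𝒯 containing both u_i and u_{i+1} shares at least one vertex with every temporal path of 𝒯 containing both u_{i+2} and u_{i+3}. -/

import Mathlib

/-! A temporal digraph on vertex set `V` is encoded by its arc-labeling
`lab : V → V → Finset ℕ`: there is an arc `u → v` iff `lab u v` is nonempty,
and `lab u v` is the (finite) set of time-steps at which the arc `u → v` is active. -/

/-- A temporal (directed) path: vertices `verts 0, …, verts len`, pairwise distinct,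
traversed at strictly increasing times `times 0 < … < times (len-1)`, each arc being
active at the time it is traversed. A single vertex (`len = 0`) is a temporal path. -/
structure TPath {V : Type*} (lab : V → V → Finset ℕ) where
  len : ℕ
  verts : Fin (len + 1) → V
  times : Fin len → ℕ
  inj : Function.Injective verts
  mono : StrictMono times
  mem_lab : ∀ i : Fin len, times i ∈ lab (verts i.castSucc) (verts i.succ)

/-- The set of vertices lying on a temporal path. -/
def TPath.vertexSet {V : Type*} {lab : V → V → Finset ℕ} (P : TPath lab) : Set V :=
  Set.range P.verts

/-- `P` is a temporal path from `u` to `v`. -/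
def TPath.FromTo {V : Type*} {lab : V → V → Finset ℕ} (P : TPath lab) (u v : V) : Prop :=
  P.verts 0 = u ∧ P.verts (Fin.last P.len) = v

/-- Two vertices are temporally connected if some temporal path contains both of them. -/
def TempConnected {V : Type*} (lab : V → V → Finset ℕ) (u v : V) : Prop :=
  ∃ P : TPath lab, u ∈ P.vertexSet ∧ v ∈ P.vertexSet

/-- A temporal antichain: a set of pairwise not temporally connected vertices. -/
def IsTempAntichain {V : Type*} (lab : V → V → Finset ℕ) (S : Set V) : Prop :=
  S.Pairwise fun u v => ¬ TempConnected lab u v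

/-- A family of temporal paths is a temporal path cover if every vertex lies on some path. -/
def IsTPC {V : Type*} (lab : V → V → Finset ℕ) {m : ℕ} (C : Fin m → TPath lab) : Prop :=
  ∀ v : V, ∃ i, v ∈ (C i).vertexSet

/-- Two temporal paths are temporally disjoint if any two of their arcs sharing an
end-vertex are traversed at distinct time-steps. -/
def TDisjoint {V : Type*} {lab : V → V → Finset ℕ} (P Q : TPath lab) : Prop :=
  ∀ i : Fin P.len, ∀ j : Fin Q.len,
    (P.verts i.castSucc = Q.verts j.castSucc ∨ P.verts i.castSucc = Q.verts j.succ ∨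
     P.verts i.succ = Q.verts j.castSucc ∨ P.verts i.succ = Q.verts j.succ) →
    P.times i ≠ Q.times j

/-- The set of possible cardinalities of temporal path covers. -/
def tpcSizes {V : Type*} (lab : V → V → Finset ℕ) : Set ℕ :=
  {m | ∃ C : Fin m → TPath lab, IsTPC lab C}

/-- The set of possible cardinalities of temporally disjoint path covers. -/
def tdpcSizes {V : Type*} (lab : V → V → Finset ℕ) : Set ℕ :=
  {m | ∃ C : Fin m → TPath lab, IsTPC lab C ∧ ∀ i j, i ≠ j → TDisjoint (C i) (C j)}

/-- The set of possible cardinalities of temporal antichains. -/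
def antichainSizes {V : Type*} (lab : V → V → Finset ℕ) : Set ℕ :=
  {m | ∃ S : Finset V, S.card = m ∧ IsTempAntichain lab ↑S}

/-- The underlying undirected graph (forget orientations and labels). -/
def underlyingGraph {V : Type*} (lab : V → V → Finset ℕ) : SimpleGraph V where
  Adj u v := u ≠ v ∧ ((lab u v).Nonempty ∨ (lab v u).Nonempty)
  symm := by constructor; intro u v h; exact ⟨h.1.symm, h.2.symm⟩
  loopless := by constructor; intro v h; exact h.1 rfl

/-- All time labels are positive integers. -/
def PositiveLabels {V : Type*} (lab : V → V → Finset ℕ) : Prop :=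
  ∀ u v : V, ∀ t ∈ lab u v, 0 < t

/-- A temporal oriented tree: the underlying undirected graph is a tree and the digraph is
an orientation of it (no pair of opposite arcs, no loops). -/
def IsTemporalOrientedTree {V : Type*} (lab : V → V → Finset ℕ) : Prop :=
  (underlyingGraph lab).IsTree ∧ ∀ u v : V, (lab u v).Nonempty → lab v u = ∅

/-- The connectivity graph: two distinct vertices are adjacent iff temporally connected. -/
def connGraph {V : Type*} (lab : V → V → Finset ℕ) : SimpleGraph V where
  Adj u v := u ≠ v ∧ TempConnected lab u v
  symm := by constructor; intro u v h; exact ⟨h.1.symm, h.2.imp fun P hP => ⟨hP.2, hP.1⟩⟩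
  loopless := by constructor; intro v h; exact h.1 rfl

/-- `c` lists the vertices of an induced cycle of length `n` of `G`, in cyclic order:
the listed vertices are distinct and two of them are adjacent iff they are cyclically
consecutive. -/
def IsInducedCycle {V : Type*} (G : SimpleGraph V) (n : ℕ) (c : Fin n → V) : Prop :=
  Function.Injective c ∧
    ∀ i j : Fin n, G.Adj (c i) (c j) ↔ ((i.val + 1) % n = j.val ∨ (j.val + 1) % n = i.val)

/-- A hole: an induced cycle of length at least 5. -/
def HasHole {V : Type*} (G : SimpleGraph V) : Prop :=
  ∃ n, 5 ≤ n ∧ ∃ c : Fin n → V, IsInducedCycle G n c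

/-- An anti-hole: an induced subgraph whose complement is a cycle of length at least 5. -/
def HasAntihole {V : Type*} (G : SimpleGraph V) : Prop :=
  ∃ n, 5 ≤ n ∧ ∃ c : Fin n → V, IsInducedCycle Gᶜ n c

/-- A graph is weakly chordal if it has no hole and no anti-hole. -/
def WeaklyChordal {V : Type*} (G : SimpleGraph V) : Prop :=
  ¬ HasHole G ∧ ¬ HasAntihole G

section TemporalHelpers

variable {V : Type*} {lab : V → V → Finset ℕ}

/-- The `m`-th vertex of a temporal path (clamped at the end). -/
def tvtx (P : TPath lab) (m : ℕ) : V :=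
  P.verts ⟨min m P.len, Nat.lt_succ_of_le (Nat.min_le_right _ _)⟩

lemma tvtx_eq (P : TPath lab) {m : ℕ} (h : m ≤ P.len) :
    tvtx P m = P.verts ⟨m, Nat.lt_succ_of_le h⟩ := by
  unfold tvtx; congr 1; exact Fin.ext (Nat.min_eq_left h)

lemma tvtx_mem (P : TPath lab) (m : ℕ) : tvtx P m ∈ P.vertexSet := ⟨_, rfl⟩

lemma mem_iff_tvtx (P : TPath lab) (v : V) :
    v ∈ P.vertexSet ↔ ∃ m, m ≤ P.len ∧ tvtx P m = v := by
  constructor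
  · rintro ⟨i, rfl⟩
    refine ⟨i.val, Nat.lt_succ_iff.mp i.isLt, ?_⟩
    rw [tvtx_eq P (Nat.lt_succ_iff.mp i.isLt)]
  · rintro ⟨m, hm, rfl⟩; exact tvtx_mem P m

lemma tvtx_inj (P : TPath lab) {m m' : ℕ} (h : m ≤ P.len) (h' : m' ≤ P.len)
    (he : tvtx P m = tvtx P m') : m = m' := by
  rw [tvtx_eq P h, tvtx_eq P h'] at he
  simpa using congrArg Fin.val (P.inj he)

lemma tvtx_lab (P : TPath lab) {m : ℕ} (h : m < P.len) :
    P.times ⟨m, h⟩ ∈ lab (tvtx P m) (tvtx P (m + 1)) := by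
  rw [tvtx_eq P (le_of_lt h), tvtx_eq P h]
  exact P.mem_lab ⟨m, h⟩

lemma nat_ivt (f : ℕ → Prop) :
    ∀ q p, p ≤ q → ¬ f p → f q → ∃ j, p ≤ j ∧ j + 1 ≤ q ∧ ¬ f j ∧ f (j + 1) := by
  intro q
  induction q with
  | zero =>
    intro p hp hfp hfq
    interval_cases p
    exact absurd hfq hfp
  | succ q ih =>
    intro p hp hfp hfq
    have hne : p ≠ q + 1 := fun h => hfp (h ▸ hfq)
    have hple : p ≤ q := by omega
    by_cases hq : f q
    · obtain ⟨j, h1, h2, h3, h4⟩ := ih p hple hfp hq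
      exact ⟨j, h1, by omega, h3, h4⟩
    · exact ⟨q, hple, le_refl _, hq, hfq⟩

lemma mono_side (σ : V → Prop)
    (hbw : ∀ v w : V, (lab v w).Nonempty → σ v → ¬ σ w → False)
    (R : TPath lab) {p q : ℕ} (hpq : p ≤ q) (hq : q ≤ R.len)
    (hσp : σ (tvtx R p)) : σ (tvtx R q) := by
  by_contra h
  obtain ⟨j, _, hjq, h1, h2⟩ :=
    nat_ivt (fun m => ¬ σ (tvtx R m)) q p hpq (not_not_intro hσp) h
  exact hbw _ _ ⟨_, tvtx_lab R (lt_of_lt_of_le hjq hq)⟩ (not_not.mp h1) h2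

lemma cross_lemma {a b : V} (σ : V → Prop)
    (hfw : ∀ v w : V, (lab v w).Nonempty → ¬ σ v → σ w → v = a ∧ w = b)
    (hbw : ∀ v w : V, (lab v w).Nonempty → σ v → ¬ σ w → False)
    (R : TPath lab) {p q : ℕ} (hp : p ≤ R.len) (hq : q ≤ R.len)
    (hσp : ¬ σ (tvtx R p)) (hσq : σ (tvtx R q)) :
    ∃ j, p ≤ j ∧ j + 1 ≤ q ∧ tvtx R j = a ∧ tvtx R (j + 1) = b := by
  have hpq : p ≤ q := by
    by_contra h
    push_neg at h
    exact hσp (mono_side σ hbw R (le_of_lt h) hp hσq)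
  obtain ⟨j, hpj, hjq, h1, h2⟩ := nat_ivt (fun m => σ (tvtx R m)) q p hpq hσp hσq
  have hj : j < R.len := lt_of_lt_of_le hjq hq
  obtain ⟨ha, hb⟩ := hfw _ _ ⟨_, tvtx_lab R hj⟩ h1 h2
  exact ⟨j, hpj, hjq, ha, hb⟩

lemma seg_avoid (W : TPath lab) {j k l : ℕ} (hj : j + 1 ≤ W.len) (hk : k ≤ W.len)
    (hl : l ≤ W.len) (h : ¬ ((j = k ∧ j + 1 = l) ∨ (j = l ∧ j + 1 = k))) :
    s(tvtx W j, tvtx W (j + 1)) ∉ ({s(tvtx W k, tvtx W l)} : Set (Sym2 V)) := by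
  intro hmem
  rw [Set.mem_singleton_iff, Sym2.eq_iff] at hmem
  rcases hmem with ⟨h1, h2⟩ | ⟨h1, h2⟩
  · exact h (Or.inl ⟨tvtx_inj W (by omega) hk h1, tvtx_inj W hj hl h2⟩)
  · exact h (Or.inr ⟨tvtx_inj W (by omega) hl h1, tvtx_inj W hj hk h2⟩)

lemma seg_reach (R : TPath lab) (E : Set (Sym2 V)) :
    ∀ d p, p + d ≤ R.len →
    (∀ j, p ≤ j → j < p + d → s(tvtx R j, tvtx R (j + 1)) ∉ E) →
    ((underlyingGraph lab).deleteEdges E).Reachable (tvtx R p) (tvtx R (p + d)) := by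
  intro d
  induction d with
  | zero => intro p _ _; exact SimpleGraph.Reachable.refl _
  | succ d ih =>
    intro p h hE
    have h1 : ((underlyingGraph lab).deleteEdges E).Adj (tvtx R (p + d)) (tvtx R (p + d + 1)) := by
      rw [SimpleGraph.deleteEdges_adj]
      refine ⟨⟨?_, Or.inl ⟨_, tvtx_lab R (show p + d < R.len by omega)⟩⟩,
        hE (p + d) (by omega) (by omega)⟩
      intro he
      have := tvtx_inj R (show p + d ≤ R.len by omega) (show p + d + 1 ≤ R.len by omega) he
      omega
    exact (ih p (by omega) (fun j hj hj' => hE j hj (by omega))).trans h1.reachable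

lemma times_congr (Z : TPath lab) {x y : ℕ} (hx : x < Z.len) (h : x = y) :
    Z.times ⟨x, hx⟩ = Z.times ⟨y, h ▸ hx⟩ := by subst h; rfl

lemma splice (R Z : TPath lab) {jR jZ : ℕ} (hjR : jR < R.len) (hjZ : jZ < Z.len)
    (hva : tvtx R jR = tvtx Z jZ) (_hvb : tvtx R (jR + 1) = tvtx Z (jZ + 1))
    (ht : R.times ⟨jR, hjR⟩ ≤ Z.times ⟨jZ, hjZ⟩)
    (hdisj : ∀ s s' : ℕ, s ≤ jR → jZ < s' → s' ≤ Z.len → tvtx R s ≠ tvtx Z s') :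
    ∃ T : TPath lab, (∀ s, s ≤ jR → tvtx R s ∈ T.vertexSet) ∧
      (∀ s', jZ < s' → s' ≤ Z.len → tvtx Z s' ∈ T.vertexSet) := by
  classical
  refine ⟨⟨jR + (Z.len - jZ),
      fun m => if m.val ≤ jR then tvtx R m.val else tvtx Z (jZ + (m.val - jR)),
      fun m => if h : m.val < jR then R.times ⟨m.val, by omega⟩
        else Z.times ⟨jZ + (m.val - jR), by have := m.isLt; omega⟩, ?_, ?_, ?_⟩, ?_, ?_⟩
  · -- injectivity
    intro m m' he
    have hm := m.isLt; have hm' := m'.isLt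
    by_cases h1 : m.val ≤ jR <;> by_cases h2 : m'.val ≤ jR <;>
      simp only [h1, h2, if_true, if_false, if_pos, if_neg, not_false_iff] at he
    · exact Fin.ext (tvtx_inj R (by omega) (by omega) he)
    · exact absurd he (hdisj _ _ h1 (by omega) (by omega))
    · exact absurd he.symm (hdisj _ _ h2 (by omega) (by omega))
    · have := tvtx_inj Z (m := jZ + (m.val - jR)) (m' := jZ + (m'.val - jR))
        (by omega) (by omega) he
      exact Fin.ext (by omega)
  · -- strict monotonicity of times
    intro m m' hlt
    have hm := m.isLt; have hm' := m'.isLt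
    have hlt' : m.val < m'.val := hlt
    by_cases h1 : m.val < jR <;> by_cases h2 : m'.val < jR
    · simp only [dif_pos h1, dif_pos h2]
      exact R.mono (show (⟨m.val, _⟩ : Fin R.len) < ⟨m'.val, _⟩ from hlt')
    · simp only [dif_pos h1, dif_neg h2]
      calc R.times ⟨m.val, _⟩ < R.times ⟨jR, hjR⟩ := R.mono h1
        _ ≤ Z.times ⟨jZ, hjZ⟩ := ht
        _ ≤ Z.times ⟨jZ + (m'.val - jR), _⟩ := Z.mono.monotone (Fin.mk_le_mk.mpr (by omega))
    · omega
    · simp only [dif_neg h1, dif_neg h2]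
      exact Z.mono (show (⟨_, _⟩ : Fin Z.len) < ⟨_, _⟩ by simp [Fin.lt_def]; omega)
  · -- mem_lab
    intro m
    have hm := m.isLt
    have hcs : (Fin.castSucc m).val = m.val := rfl
    have hsc : (Fin.succ m).val = m.val + 1 := rfl
    rcases lt_trichotomy m.val jR with h | h | h
    · simp only [hcs, hsc, if_pos (show m.val ≤ jR by omega),
        if_pos (show m.val + 1 ≤ jR by omega), dif_pos h]
      exact tvtx_lab R (by omega)
    · simp only [hcs, hsc, if_pos (show m.val ≤ jR by omega),
        if_neg (show ¬ m.val + 1 ≤ jR by omega), dif_neg (show ¬ m.val < jR by omega)]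
      have e1 : tvtx R (m.val) = tvtx Z jZ := by rw [h, hva]
      rw [show jZ + (m.val + 1 - jR) = jZ + 1 by omega, e1,
        times_congr Z (show jZ + (m.val - jR) < Z.len by omega)
          (show jZ + (m.val - jR) = jZ by omega)]
      exact tvtx_lab Z hjZ
    · simp only [hcs, hsc, if_neg (show ¬ m.val ≤ jR by omega),
        if_neg (show ¬ m.val + 1 ≤ jR by omega), dif_neg (show ¬ m.val < jR by omega)]
      rw [show jZ + (m.val + 1 - jR) = (jZ + (m.val - jR)) + 1 by omega]
      exact tvtx_lab Z (by omega)
  · -- R part contained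
    intro s hs
    exact ⟨⟨s, by show s < jR + (Z.len - jZ) + 1; omega⟩, by simp only [if_pos hs]⟩
  · -- Z part contained
    intro s' h1 h2
    refine ⟨⟨jR + (s' - jZ), by show jR + (s' - jZ) < jR + (Z.len - jZ) + 1; omega⟩, ?_⟩
    simp only [if_neg (show ¬ jR + (s' - jZ) ≤ jR by omega)]
    rw [show jZ + (jR + (s' - jZ) - jR) = s' by omega]

end TemporalHelpers


/-- For an induced even cycle u₁, …, uₖ (k ≥ 6) in the connectivity graph of a temporal
oriented tree, any temporal path containing uᵢ and uᵢ₊₁ shares a vertex with any temporal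
path containing uᵢ₊₂ and uᵢ₊₃ (indices mod k). -/
theorem consecutive_edges_paths_intersect {V : Type*} [Fintype V] (lab : V → V → Finset ℕ)
    (hpos : PositiveLabels lab) (htree : IsTemporalOrientedTree lab)
    (n : ℕ) (hn : 6 ≤ n) (heven : Even n) (c : Fin n → V)
    (hc : IsInducedCycle (connGraph lab) n c)
    (i1 i2 i3 i4 : Fin n)
    (h12 : (i1.val + 1) % n = i2.val) (h23 : (i2.val + 1) % n = i3.val)
    (h34 : (i3.val + 1) % n = i4.val)
    (P Q : TPath lab)
    (hP1 : c i1 ∈ P.vertexSet) (hP2 : c i2 ∈ P.vertexSet)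
    (hQ3 : c i3 ∈ Q.vertexSet) (hQ4 : c i4 ∈ Q.vertexSet) :
    (P.vertexSet ∩ Q.vertexSet).Nonempty := by
  classical
  by_contra hcon
  rw [Set.not_nonempty_iff_eq_empty] at hcon
  have hdisjPQ : ∀ v, v ∈ P.vertexSet → v ∉ Q.vertexSet := fun v h1 h2 =>
    Set.eq_empty_iff_forall_notMem.mp hcon v ⟨h1, h2⟩
  have hn0 : 0 < n := by omega
  obtain ⟨hcinj, hcadj⟩ := hc
  obtain ⟨htr, horient⟩ := htree
  have hnoloop : ∀ v : V, ¬ (lab v v).Nonempty := fun v h =>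
    Finset.not_nonempty_empty ((horient v v h) ▸ h)
  -- a temporal path containing both `c i2` and `c i3`
  have hadj23 : (connGraph lab).Adj (c i2) (c i3) := (hcadj i2 i3).mpr (Or.inl h23)
  obtain ⟨W, hW2, hW3⟩ := hadj23.2
  obtain ⟨p2, hp2le, hp2⟩ := (mem_iff_tvtx W (c i2)).mp hW2
  obtain ⟨p3, hp3le, hp3⟩ := (mem_iff_tvtx W (c i3)).mp hW3
  have hP3 : tvtx W p3 ∉ P.vertexSet := by
    rw [hp3]; intro h; exact hdisjPQ _ h hQ3
  -- find on W an edge leaving `P`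
  have hstep : ∃ x y : V, x ∈ P.vertexSet ∧ y ∉ P.vertexSet ∧
      ((lab x y).Nonempty ∨ (lab y x).Nonempty) ∧
      ((underlyingGraph lab).deleteEdges {s(x, y)}).Reachable (c i2) x ∧
      ((underlyingGraph lab).deleteEdges {s(x, y)}).Reachable (c i3) y := by
    rcases le_total p2 p3 with hle | hle
    · obtain ⟨k, hk1, hk2, hk3, hk4⟩ := nat_ivt (fun m => tvtx W m ∉ P.vertexSet) p3 p2 hle
        (show ¬ (tvtx W p2 ∉ P.vertexSet) from not_not_intro (by rw [hp2]; exact hP2)) hP3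
      refine ⟨tvtx W k, tvtx W (k + 1), not_not.mp hk3, hk4,
        Or.inl ⟨_, tvtx_lab W (by omega)⟩, ?_, ?_⟩
      · have h := seg_reach W {s(tvtx W k, tvtx W (k + 1))} (k - p2) p2 (by omega)
          (fun j hj1 hj2 => seg_avoid W (by omega) (by omega) (by omega) (by omega))
        rw [show p2 + (k - p2) = k by omega, hp2] at h
        exact h
      · have h := seg_reach W {s(tvtx W k, tvtx W (k + 1))} (p3 - (k + 1)) (k + 1) (by omega)
          (fun j hj1 hj2 => seg_avoid W (by omega) (by omega) (by omega) (by omega))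
        rw [show k + 1 + (p3 - (k + 1)) = p3 by omega, hp3] at h
        exact h.symm
    · obtain ⟨k, hk1, hk2, hk3, hk4⟩ := nat_ivt (fun m => tvtx W m ∈ P.vertexSet) p2 p3 hle
        hP3 (show tvtx W p2 ∈ P.vertexSet by rw [hp2]; exact hP2)
      refine ⟨tvtx W (k + 1), tvtx W k, hk4, hk3,
        Or.inr ⟨_, tvtx_lab W (by omega)⟩, ?_, ?_⟩
      · have h := seg_reach W {s(tvtx W (k + 1), tvtx W k)} (p2 - (k + 1)) (k + 1) (by omega)
          (fun j hj1 hj2 => seg_avoid W (by omega) (by omega) (by omega) (by omega))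
        rw [show k + 1 + (p2 - (k + 1)) = p2 by omega, hp2] at h
        exact h.symm
      · have h := seg_reach W {s(tvtx W (k + 1), tvtx W k)} (k - p3) p3 (by omega)
          (fun j hj1 hj2 => seg_avoid W (by omega) (by omega) (by omega) (by omega))
        rw [show p3 + (k - p3) = k by omega, hp3] at h
        exact h
  obtain ⟨x, y, hxP, hyP, hadjxy, hr2, hr3⟩ := hstep
  have hxy_ne : x ≠ y := fun h => hyP (h ▸ hxP)
  obtain ⟨a, b, hlab, hyab, hxab, hsetEq⟩ : ∃ a b : V, (lab a b).Nonempty ∧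
      (y = a ∨ y = b) ∧ (x = a ∨ x = b) ∧
      ({s(x, y)} : Set (Sym2 V)) = {s(a, b)} := by
    rcases hadjxy with h | h
    · exact ⟨x, y, h, Or.inr rfl, Or.inl rfl, rfl⟩
    · exact ⟨y, x, h, Or.inl rfl, Or.inr rfl, by rw [Sym2.eq_swap]⟩
  rw [hsetEq] at hr2 hr3
  set H := (underlyingGraph lab).deleteEdges {s(a, b)} with hHdef
  set σ : V → Prop := fun v => H.Reachable v b with hσdef
  have hab_ne : a ≠ b := fun h => hnoloop a (by rw [← h] at hlab; exact hlab)
  have hGtab : (underlyingGraph lab).Adj a b := ⟨hab_ne, Or.inl hlab⟩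
  have hnr : ¬ H.Reachable a b := by
    have hbr := (SimpleGraph.isAcyclic_iff_forall_adj_isBridge.mp htr.2) hGtab
    rw [SimpleGraph.isBridge_iff] at hbr
    exact hbr
  have hlabba : lab b a = ∅ := horient a b hlab
  have hσa : ¬ σ a := hnr
  have hσb : σ b := SimpleGraph.Reachable.refl b
  have hreach_iff : ∀ u v' : V, H.Reachable u v' → (σ u ↔ σ v') := fun u v' h =>
    ⟨fun h1 => h.symm.trans h1, fun h1 => h.trans h1⟩
  have hfw : ∀ v w : V, (lab v w).Nonempty → ¬ σ v → σ w → v = a ∧ w = b := by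
    intro v w hvw hσv hσw
    have hvw_ne : v ≠ w := fun h => hnoloop v (by rw [← h] at hvw; exact hvw)
    by_cases he : s(v, w) = s(a, b)
    · rw [Sym2.eq_iff] at he
      rcases he with ⟨rfl, rfl⟩ | ⟨rfl, rfl⟩
      · exact ⟨rfl, rfl⟩
      · exact absurd hσb hσv
    · have hadjH : H.Adj v w := by
        rw [hHdef, SimpleGraph.deleteEdges_adj]
        exact ⟨⟨hvw_ne, Or.inl hvw⟩, by simpa using he⟩
      exact absurd (hadjH.reachable.trans hσw) hσv
  have hbw : ∀ v w : V, (lab v w).Nonempty → σ v → ¬ σ w → False := by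
    intro v w hvw hσv hσw
    have hvw_ne : v ≠ w := fun h => hnoloop v (by rw [← h] at hvw; exact hvw)
    by_cases he : s(v, w) = s(a, b)
    · rw [Sym2.eq_iff] at he
      rcases he with ⟨rfl, rfl⟩ | ⟨rfl, rfl⟩
      · exact hσa hσv
      · rw [hlabba] at hvw; exact Finset.not_nonempty_empty hvw
    · have hadjH : H.Adj v w := by
        rw [hHdef, SimpleGraph.deleteEdges_adj]
        exact ⟨⟨hvw_ne, Or.inl hvw⟩, by simpa using he⟩
      exact hσw (hadjH.reachable.symm.trans hσv)
  have hσ2x : σ (c i2) ↔ σ x := hreach_iff _ _ hr2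
  have hσ3y : σ (c i3) ↔ σ y := hreach_iff _ _ hr3
  have hσxy : ¬ (σ x ↔ σ y) := by
    rcases hxab with rfl | rfl <;> rcases hyab with h | h
    · exact absurd h.symm hxy_ne
    · subst h; exact fun hiff => hσa (hiff.mpr hσb)
    · subst h; exact fun hiff => hσa (hiff.mp hσb)
    · exact absurd h.symm hxy_ne
  have hσP : ∀ v w : V, v ∈ P.vertexSet → w ∈ P.vertexSet → (σ v ↔ σ w) := by
    intro v w hv hw
    by_contra hne
    obtain ⟨pv, hpvle, hpv⟩ := (mem_iff_tvtx P v).mp hv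
    obtain ⟨pw, hpwle, hpw⟩ := (mem_iff_tvtx P w).mp hw
    have hcases : (¬ σ v ∧ σ w) ∨ (¬ σ w ∧ σ v) := by
      by_cases h1 : σ v <;> by_cases h2 : σ w
      · exact absurd (iff_of_true h1 h2) hne
      · exact Or.inr ⟨h2, h1⟩
      · exact Or.inl ⟨h1, h2⟩
      · exact absurd (iff_of_false h1 h2) hne
    have hyPmem : y ∈ P.vertexSet := by
      rcases hcases with ⟨h1, h2⟩ | ⟨h1, h2⟩
      · obtain ⟨j, _, hj2, hja, hjb⟩ := cross_lemma σ hfw hbw P hpvle hpwle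
          (by rw [hpv]; exact h1) (by rw [hpw]; exact h2)
        rcases hyab with rfl | rfl
        · exact hja ▸ tvtx_mem P j
        · exact hjb ▸ tvtx_mem P (j + 1)
      · obtain ⟨j, _, hj2, hja, hjb⟩ := cross_lemma σ hfw hbw P hpwle hpvle
          (by rw [hpw]; exact h1) (by rw [hpv]; exact h2)
        rcases hyab with rfl | rfl
        · exact hja ▸ tvtx_mem P j
        · exact hjb ▸ tvtx_mem P (j + 1)
    exact hyP hyPmem
  have hσQ : ∀ v w : V, v ∈ Q.vertexSet → w ∈ Q.vertexSet → (σ v ↔ σ w) := by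
    intro v w hv hw
    by_contra hne
    obtain ⟨pv, hpvle, hpv⟩ := (mem_iff_tvtx Q v).mp hv
    obtain ⟨pw, hpwle, hpw⟩ := (mem_iff_tvtx Q w).mp hw
    have hcases : (¬ σ v ∧ σ w) ∨ (¬ σ w ∧ σ v) := by
      by_cases h1 : σ v <;> by_cases h2 : σ w
      · exact absurd (iff_of_true h1 h2) hne
      · exact Or.inr ⟨h2, h1⟩
      · exact Or.inl ⟨h1, h2⟩
      · exact absurd (iff_of_false h1 h2) hne
    have hxQmem : x ∈ Q.vertexSet := by
      rcases hcases with ⟨h1, h2⟩ | ⟨h1, h2⟩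
      · obtain ⟨j, _, hj2, hja, hjb⟩ := cross_lemma σ hfw hbw Q hpvle hpwle
          (by rw [hpv]; exact h1) (by rw [hpw]; exact h2)
        rcases hxab with rfl | rfl
        · exact hja ▸ tvtx_mem Q j
        · exact hjb ▸ tvtx_mem Q (j + 1)
      · obtain ⟨j, _, hj2, hja, hjb⟩ := cross_lemma σ hfw hbw Q hpwle hpvle
          (by rw [hpw]; exact h1) (by rw [hpv]; exact h2)
        rcases hxab with rfl | rfl
        · exact hja ▸ tvtx_mem Q j
        · exact hjb ▸ tvtx_mem Q (j + 1)
    exact hdisjPQ x hxP hxQmem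
  have hσ12 : σ (c i1) ↔ σ (c i2) := hσP _ _ hP1 hP2
  have hσ43 : σ (c i4) ↔ σ (c i3) := hσQ _ _ hQ4 hQ3
  have hσ23 : ¬ (σ (c i2) ↔ σ (c i3)) := fun hiff => hσxy (hσ2x.symm.trans (hiff.trans hσ3y))
  -- walking around the rest of the cycle
  have hv2 : i2.val = (i1.val + 1) % n := h12.symm
  have hv3 : i3.val = (i1.val + 2) % n := by
    rw [← h23, hv2, Nat.mod_add_mod]
  have hv4 : i4.val = (i1.val + 3) % n := by
    rw [← h34, hv3, Nat.mod_add_mod]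
  set F : ℕ → Fin n := fun r => ⟨(i4.val + r) % n, Nat.mod_lt _ hn0⟩ with hFdef
  have hFval : ∀ r, (F r).val = (i1.val + (3 + r)) % n := by
    intro r
    show (i4.val + r) % n = (i1.val + (3 + r)) % n
    rw [hv4, Nat.mod_add_mod, Nat.add_assoc]
  have hF0 : c (F 0) = c i4 := by
    congr 1
    apply Fin.ext
    show (i4.val + 0) % n = i4.val
    rw [Nat.add_zero, Nat.mod_eq_of_lt i4.isLt]
  have hFlast : c (F (n - 3)) = c i1 := by
    congr 1
    apply Fin.ext
    rw [hFval, show i1.val + (3 + (n - 3)) = i1.val + n by omega, Nat.add_mod_right,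
      Nat.mod_eq_of_lt i1.isLt]
  have hFadj : ∀ r, (connGraph lab).Adj (c (F r)) (c (F (r + 1))) := by
    intro r
    refine (hcadj _ _).mpr (Or.inl ?_)
    show ((i4.val + r) % n + 1) % n = (i4.val + (r + 1)) % n
    rw [Nat.mod_add_mod, Nat.add_assoc]
  obtain ⟨r, hr0, hrle, hfr, hfr1⟩ := nat_ivt (fun m => (σ (c (F m)) ↔ σ (c i2))) (n - 3) 0
    (Nat.zero_le _)
    (show ¬ (σ (c (F 0)) ↔ σ (c i2)) by
      rw [hF0]; exact fun hiff => hσ23 (hiff.symm.trans hσ43))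
    (show (σ (c (F (n - 3))) ↔ σ (c i2)) by rw [hFlast]; exact hσ12)
  obtain ⟨Z, hZ0, hZ1⟩ := (hFadj r).2
  have hσZ : ¬ (σ (c (F r)) ↔ σ (c (F (r + 1)))) := fun hiff => hfr (hiff.trans hfr1)
  -- chords from the cycle to {c i2, c i3} are impossible
  have hexcl : ∀ s : ℕ, s ≤ n - 3 → ∀ w : Fin n, (w = i2 ∨ w = i3) →
      ¬ (σ (c w) ↔ σ (c (F s))) → ¬ (connGraph lab).Adj (c w) (c (F s)) := by
    intro s hs w hw hσne hadj
    rw [hcadj, hFval] at hadj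
    rcases hw with rfl | rfl
    · rw [hv2] at hadj
      rcases hadj with h | h
      · rw [Nat.mod_add_mod, show i1.val + 1 + 1 = i1.val + 2 by omega] at h
        have hmod : i1.val + 2 ≡ i1.val + (3 + s) [MOD n] := h
        have hdvd := (Nat.modEq_iff_dvd' (by omega)).mp (Nat.ModEq.add_left_cancel' _ hmod)
        have := Nat.le_of_dvd (by omega) hdvd
        omega
      · rw [Nat.mod_add_mod, show i1.val + (3 + s) + 1 = i1.val + (4 + s) by omega] at h
        have hmod : i1.val + 1 ≡ i1.val + (4 + s) [MOD n] := h.symm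
        have hdvd := (Nat.modEq_iff_dvd' (by omega)).mp (Nat.ModEq.add_left_cancel' _ hmod)
        have hle := Nat.le_of_dvd (by omega) hdvd
        have hseq : s = n - 3 := by omega
        rw [hseq, hFlast] at hσne
        exact hσne hσ12.symm
    · rw [hv3] at hadj
      rcases hadj with h | h
      · rw [Nat.mod_add_mod, show i1.val + 2 + 1 = i1.val + 3 by omega] at h
        have hmod : i1.val + 3 ≡ i1.val + (3 + s) [MOD n] := h
        have hdvd := (Nat.modEq_iff_dvd' (by omega)).mp (Nat.ModEq.add_left_cancel' _ hmod)
        rcases Nat.eq_zero_or_pos s with hs0 | hs0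
        · rw [hs0, hF0] at hσne
          exact hσne hσ43.symm
        · have hdvd' : n ∣ s := by rwa [show 3 + s - 3 = s by omega] at hdvd
          have := Nat.le_of_dvd hs0 hdvd'
          omega
      · rw [Nat.mod_add_mod, show i1.val + (3 + s) + 1 = i1.val + (4 + s) by omega] at h
        have hmod : i1.val + 2 ≡ i1.val + (4 + s) [MOD n] := h.symm
        have hdvd := (Nat.modEq_iff_dvd' (by omega)).mp (Nat.ModEq.add_left_cancel' _ hmod)
        have := Nat.le_of_dvd (by omega) hdvd
        omega
  have hfinal : ∀ wv zv : V, (wv = c i2 ∨ wv = c i3) →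
      (zv = c (F r) ∨ zv = c (F (r + 1))) →
      ¬ (σ wv ↔ σ zv) → TempConnected lab wv zv → False := by
    intro wv zv hw hz hσne htc
    have hne : wv ≠ zv := fun h => hσne (by rw [h])
    have hadjwz : (connGraph lab).Adj wv zv := ⟨hne, htc⟩
    rcases hw with rfl | rfl <;> rcases hz with rfl | rfl
    · exact hexcl r (by omega) i2 (Or.inl rfl) hσne hadjwz
    · exact hexcl (r + 1) (by omega) i2 (Or.inl rfl) hσne hadjwz
    · exact hexcl r (by omega) i3 (Or.inr rfl) hσne hadjwz
    · exact hexcl (r + 1) (by omega) i3 (Or.inr rfl) hσne hadjwz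
  -- crossing points of W and Z
  have hWpack : ∃ pA pB : ℕ, pA ≤ W.len ∧ pB ≤ W.len ∧ ∃ jW, ∃ _ : jW < W.len,
      pA ≤ jW ∧ jW + 1 ≤ pB ∧ tvtx W jW = a ∧ tvtx W (jW + 1) = b ∧
      ¬ σ (tvtx W pA) ∧ σ (tvtx W pB) ∧
      ((tvtx W pA = c i2 ∧ tvtx W pB = c i3) ∨ (tvtx W pA = c i3 ∧ tvtx W pB = c i2)) := by
    by_cases h2 : σ (c i2)
    · have h3 : ¬ σ (c i3) := fun h3' => hσ23 (iff_of_true h2 h3')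
      obtain ⟨j, hj1, hj2, hj3, hj4⟩ := cross_lemma σ hfw hbw W hp3le hp2le
        (by rw [hp3]; exact h3) (by rw [hp2]; exact h2)
      exact ⟨p3, p2, hp3le, hp2le, j, by omega, hj1, hj2, hj3, hj4,
        by rw [hp3]; exact h3, by rw [hp2]; exact h2, Or.inr ⟨hp3, hp2⟩⟩
    · have h3 : σ (c i3) := by by_contra h3'; exact hσ23 (iff_of_false h2 h3')
      obtain ⟨j, hj1, hj2, hj3, hj4⟩ := cross_lemma σ hfw hbw W hp2le hp3le
        (by rw [hp2]; exact h2) (by rw [hp3]; exact h3)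
      exact ⟨p2, p3, hp2le, hp3le, j, by omega, hj1, hj2, hj3, hj4,
        by rw [hp2]; exact h2, by rw [hp3]; exact h3, Or.inl ⟨hp2, hp3⟩⟩
  obtain ⟨q0, hq0le, hq0⟩ := (mem_iff_tvtx Z (c (F r))).mp hZ0
  obtain ⟨q1, hq1le, hq1⟩ := (mem_iff_tvtx Z (c (F (r + 1)))).mp hZ1
  have hZpack : ∃ pA pB : ℕ, pA ≤ Z.len ∧ pB ≤ Z.len ∧ ∃ jz, ∃ _ : jz < Z.len,
      pA ≤ jz ∧ jz + 1 ≤ pB ∧ tvtx Z jz = a ∧ tvtx Z (jz + 1) = b ∧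
      ¬ σ (tvtx Z pA) ∧ σ (tvtx Z pB) ∧
      ((tvtx Z pA = c (F r) ∧ tvtx Z pB = c (F (r + 1))) ∨
        (tvtx Z pA = c (F (r + 1)) ∧ tvtx Z pB = c (F r))) := by
    by_cases h0 : σ (c (F r))
    · have h1 : ¬ σ (c (F (r + 1))) := fun h1' => hσZ (iff_of_true h0 h1')
      obtain ⟨j, hj1, hj2, hj3, hj4⟩ := cross_lemma σ hfw hbw Z hq1le hq0le
        (by rw [hq1]; exact h1) (by rw [hq0]; exact h0)
      exact ⟨q1, q0, hq1le, hq0le, j, by omega, hj1, hj2, hj3, hj4,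
        by rw [hq1]; exact h1, by rw [hq0]; exact h0, Or.inr ⟨hq1, hq0⟩⟩
    · have h1 : σ (c (F (r + 1))) := by by_contra h1'; exact hσZ (iff_of_false h0 h1')
      obtain ⟨j, hj1, hj2, hj3, hj4⟩ := cross_lemma σ hfw hbw Z hq0le hq1le
        (by rw [hq0]; exact h0) (by rw [hq1]; exact h1)
      exact ⟨q0, q1, hq0le, hq1le, j, by omega, hj1, hj2, hj3, hj4,
        by rw [hq0]; exact h0, by rw [hq1]; exact h1, Or.inl ⟨hq0, hq1⟩⟩
  obtain ⟨pWA, pWB, hWAle, hWBle, jW, hjW, hWA2, hWB2, hWa, hWb, hσWA, hσWB, hWor⟩ := hWpack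
  obtain ⟨pZA, pZB, hZAle, hZBle, jz, hjz, hZA2, hZB2, hZa, hZb, hσZA, hσZB, hZor⟩ := hZpack
  have hWlow : ∀ s, s ≤ jW → ¬ σ (tvtx W s) := by
    intro s hs hσs
    exact hσa (by rw [← hWa]; exact mono_side σ hbw W hs (by omega) hσs)
  have hZlow : ∀ s, s ≤ jz → ¬ σ (tvtx Z s) := by
    intro s hs hσs
    exact hσa (by rw [← hZa]; exact mono_side σ hbw Z hs (by omega) hσs)
  have hWhigh : ∀ s', jW < s' → s' ≤ W.len → σ (tvtx W s') := by
    intro s' h1 h2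
    have hb' : σ (tvtx W (jW + 1)) := by rw [hWb]
    exact mono_side σ hbw W (by omega) h2 hb'
  have hZhigh : ∀ s', jz < s' → s' ≤ Z.len → σ (tvtx Z s') := by
    intro s' h1 h2
    have hb' : σ (tvtx Z (jz + 1)) := by rw [hZb]
    exact mono_side σ hbw Z (by omega) h2 hb'
  rcases le_total (W.times ⟨jW, hjW⟩) (Z.times ⟨jz, hjz⟩) with hT | hT
  · obtain ⟨T, hT1, hT2⟩ := splice W Z hjW hjz (by rw [hWa, hZa]) (by rw [hWb, hZb]) hT
      (fun s s' h1 h2 h3 he => hWlow s h1 (by rw [he]; exact hZhigh s' h2 h3))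
    have htc : TempConnected lab (tvtx W pWA) (tvtx Z pZB) :=
      ⟨T, hT1 _ hWA2, hT2 _ (by omega) hZBle⟩
    exact hfinal _ _ (hWor.imp And.left And.left) ((hZor.imp And.right And.right).symm)
      (fun hiff => hσWA (hiff.mpr hσZB)) htc
  · obtain ⟨T, hT1, hT2⟩ := splice Z W hjz hjW (by rw [hWa, hZa]) (by rw [hWb, hZb]) hT
      (fun s s' h1 h2 h3 he => hZlow s h1 (by rw [he]; exact hWhigh s' h2 h3))
    have htc : TempConnected lab (tvtx W pWB) (tvtx Z pZA) :=
      ⟨T, hT2 _ (by omega) hWBle, hT1 _ hZA2⟩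
    exact hfinal _ _ ((hWor.imp And.right And.right).symm) (hZor.imp And.left And.left)
      (fun hiff => hσZA (hiff.mp hσWB)) htc
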